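/- In the Tamari lattice on Y_n, any interval [c_{p+q}, t' ∨-composed as t'/t''] with |t'| = p, |t''| = q is isomorphic as a poset to the product of the intervals [c_p, t'] and [c_q, t''] in the Tamari lattices of orders p and q; consequently the Möbius function satisfies μ(c_{p+q}, t'/t'') = μ(c_p, t')·μ(c_q, t''). -/

import Mathlib

/-- Planar binary trees: a leaf, or an internal vertex with two subtrees. -/
inductive PBT : Type
  | leaf : PBT
  | node : PBT → PBT → PBT
  deriving DecidableEq

namespace PBT

/-- Number of internal vertices of a planar binary tree. -/
def size : PBT → ℕ
  | leaf => 0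
  | node l r => size l + size r + 1

/-- `under u v` ("u ∖ v") grafts `v` at the rightmost leaf of `u`. -/
def under : PBT → PBT → PBT
  | leaf, v => v
  | node l r, v => node l (under r v)

/-- `over u v` ("u / v") grafts `u` at the leftmost leaf of `v`. -/
def overP (u : PBT) : PBT → PBT
  | leaf => u
  | node l r => node (overP u l) r

/-- Number of internal vertices on the rightmost path (right spine). -/
def rightSpine : PBT → ℕ
  | leaf => 0
  | node _ r => rightSpine r + 1

/-- The left comb with `p` internal vertices. -/
def leftComb : ℕ → PBT
  | 0 => leaf
  | p + 1 => node (leftComb p) leaf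

/-- The right comb with `q` internal vertices. -/
def rightComb : ℕ → PBT
  | 0 => leaf
  | q + 1 => node leaf (rightComb q)

/-- The list of all factorizations `t = u ∖ v` (each exactly once). -/
def underFactors : PBT → List (PBT × PBT)
  | leaf => [(leaf, leaf)]
  | node l r => (leaf, node l r) :: (underFactors r).map (fun p => (node l p.1, p.2))

/-- The list of all factorizations `t = u / v` (each exactly once). -/
def overFactors : PBT → List (PBT × PBT)
  | leaf => [(leaf, leaf)]
  | node l r => (node l r, leaf) :: (overFactors l).map (fun p => (p.1, node p.2 r))

/-- Convolution of tree-expanded series dual to the over product: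
`(A / B)_w = Σ_{s / t = w} A_s B_t`. -/
def overConv {R : Type*} [CommRing R] (f g : PBT → R) (w : PBT) : R :=
  ((overFactors w).map (fun p => f p.1 * g p.2)).sum

/-- Convolution of tree-expanded series dual to the under product:
`(A ∖ B)_w = Σ_{s ∖ t = w} A_s B_t`. -/
def underConv {R : Type*} [CommRing R] (f g : PBT → R) (w : PBT) : R :=
  ((underFactors w).map (fun p => f p.1 * g p.2)).sum

/-- The list of all planar binary trees with `n` internal vertices. -/
def treesOfSize : ℕ → List PBT
  | 0 => [leaf]
  | n + 1 =>
    (List.range (n + 1)).attach.flatMap (fun i =>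
      (treesOfSize i.1).flatMap (fun l =>
        (treesOfSize (n - i.1)).map (fun r => node l r)))
  termination_by n => n
  decreasing_by
  · exact Nat.lt_succ_of_le (Nat.sub_le _ _)
  · exact List.mem_range.mp i.2

/-- `treePow B t` is the series `B^t = μ_t(B,…,B)`, the substitution of the
series `B` in all internal vertices of `t` (duplicial operad composition),
using the decomposition `l ∨ r = (l / Y) ∖ r`. -/
def treePow {R : Type*} [CommRing R] (B : PBT → R) : PBT → PBT → R
  | leaf => fun w => if w = leaf then 1 else 0
  | node l r => underConv (overConv (treePow B l) B) (treePow B r)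

/-- Composition of tree-expanded series: `(A ∘ B)_w = Σ_t A_t (B^t)_w`,
where only trees with at most `|w|` vertices can contribute. -/
def comp {R : Type*} [CommRing R] (A B : PBT → R) (w : PBT) : R :=
  (((List.range (size w + 1)).flatMap treesOfSize).map
    (fun t => A t * treePow B t w)).sum

/-- The series reduced to the one-vertex tree `Y`. -/
def Yser {R : Type*} [CommRing R] : PBT → R :=
  fun t => if t = node leaf leaf then 1 else 0

/-- The series reduced to the root tree `|` (unit for the over/under products). -/
def unitSer {R : Type*} [CommRing R] : PBT → R :=
  fun t => if t = leaf then 1 else 0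

/-- Suspension of a tree-expanded series: the coefficient on a tree with `n`
internal vertices is multiplied by `(-1)^(n-1)`. -/
def susp {R : Type*} [CommRing R] (A : PBT → R) : PBT → R :=
  fun t => (-1 : R) ^ (size t + 1) * A t

/-- One covering step of the Tamari order: a right rotation
`(a ∨ b) ∨ c ⟶ a ∨ (b ∨ c)` somewhere in the tree. -/
inductive TamariStep : PBT → PBT → Prop
  | rot (a b c : PBT) : TamariStep (node (node a b) c) (node a (node b c))
  | left {l l' : PBT} (r : PBT) : TamariStep l l' → TamariStep (node l r) (node l' r)
  | right (l : PBT) {r r' : PBT} : TamariStep r r' → TamariStep (node l r) (node l r')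

/-- The Tamari partial order on planar binary trees. -/
def tle : PBT → PBT → Prop := Relation.ReflTransGen TamariStep


theorem size_over (u v : PBT) : size (overP u v) = size u + size v := by
  induction v with
  | leaf => simp [overP, size]
  | node l r ihl ihr => simp only [overP, size, ihl]; omega

theorem TamariStep.size_eq {z w : PBT} (h : TamariStep z w) : size z = size w := by
  induction h with
  | rot a b c => simp only [size]; omega
  | left r h ih => simp only [size, ih]
  | right l h ih => simp only [size, ih]

theorem tle.size_eq {z w : PBT} (h : tle z w) : size z = size w := by
  induction h with
  | refl => rfl
  | tail h1 h2 ih => rw [ih, h2.size_eq]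

def wt : PBT → ℕ
  | leaf => 0
  | node l r => wt l + wt r + size r

theorem TamariStep.wt_lt {z w : PBT} (h : TamariStep z w) : wt z < wt w := by
  induction h with
  | rot a b c => simp only [wt, size]; omega
  | left r h ih => simp only [wt]; omega
  | right l h ih => have := h.size_eq; simp only [wt]; omega

theorem tle.wt_le {z w : PBT} (h : tle z w) : wt z ≤ wt w := by
  induction h with
  | refl => exact le_rfl
  | tail h1 h2 ih => exact ih.trans h2.wt_lt.le

theorem tle.wt_lt {z w : PBT} (h : tle z w) (hne : z ≠ w) : wt z < wt w := by
  induction h with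
  | refl => exact absurd rfl hne
  | tail h1 h2 ih => exact lt_of_le_of_lt (tle.wt_le h1) h2.wt_lt

theorem tle.antisymm {z w : PBT} (h1 : tle z w) (h2 : tle w z) : z = w := by
  by_contra hne
  exact absurd (h2.wt_lt (Ne.symm hne)) (not_lt.mpr (h1.wt_lt hne).le)

theorem tle.refl (t : PBT) : tle t t := Relation.ReflTransGen.refl

theorem tle.trans {a b c : PBT} (h1 : tle a b) (h2 : tle b c) : tle a c :=
  Relation.ReflTransGen.trans h1 h2

theorem TamariStep.over_left {a a' : PBT} (h : TamariStep a a') (v : PBT) :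
    TamariStep (overP a v) (overP a' v) := by
  induction v with
  | leaf => exact h
  | node l r ihl ihr => exact .left r ihl

theorem TamariStep.over_right (u : PBT) {b b' : PBT} (h : TamariStep b b') :
    TamariStep (overP u b) (overP u b') := by
  induction h with
  | rot a b c => exact .rot (overP u a) b c
  | left r h ih => exact .left r ih
  | right l h ih => exact .right (overP u l) h

theorem tle_over_mono {a a' b b' : PBT} (h1 : tle a a') (h2 : tle b b') :
    tle (overP a b) (overP a' b') := by
  have H1 : tle (overP a b) (overP a' b) := by
    induction h1 with
    | refl => exact Relation.ReflTransGen.refl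
    | tail h hs ih => exact Relation.ReflTransGen.tail ih (hs.over_left b)
  have H2 : tle (overP a' b) (overP a' b') := by
    induction h2 with
    | refl => exact Relation.ReflTransGen.refl
    | tail h hs ih => exact Relation.ReflTransGen.tail ih (hs.over_right a')
  exact H1.trans H2

theorem over_inj {a b c d : PBT} (h : overP a b = overP c d) (hs : size a = size c) :
    a = c ∧ b = d := by
  induction b generalizing d with
  | leaf =>
    cases d with
    | leaf => exact ⟨h, rfl⟩
    | node l r =>
      exfalso
      have := congrArg size h
      rw [size_over, size_over] at this
      simp only [size] at this
      omega
  | node l r ihl ihr =>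
    cases d with
    | leaf =>
      exfalso
      have := congrArg size h
      rw [size_over, size_over] at this
      simp only [size] at this
      omega
    | node l' r' =>
      simp only [overP, node.injEq] at h
      obtain ⟨h1, h2⟩ := h
      obtain ⟨e1, e2⟩ := ihl h1
      exact ⟨e1, by rw [e2, h2]⟩

theorem tle_node_left {l l' : PBT} (r : PBT) (h : tle l l') : tle (node l r) (node l' r) := by
  induction h with
  | refl => exact Relation.ReflTransGen.refl
  | tail h hs ih => exact Relation.ReflTransGen.tail ih (.left r hs)

theorem tle_node_right (l : PBT) {r r' : PBT} (h : tle r r') : tle (node l r) (node l r') := by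
  induction h with
  | refl => exact Relation.ReflTransGen.refl
  | tail h hs ih => exact Relation.ReflTransGen.tail ih (.right l hs)

theorem step_factor {z w : PBT} (h : TamariStep z w) :
    ∀ u v : PBT, w = overP u v →
      ∃ z₁ z₂, z = overP z₁ z₂ ∧ size z₁ = size u ∧ tle z₁ u ∧ tle z₂ v := by
  induction h with
  | rot a b c =>
    intro u v hw
    cases v with
    | leaf =>
      refine ⟨node (node a b) c, leaf, rfl, ?_, ?_, tle.refl _⟩
      · rw [show u = node a (node b c) from hw.symm]
        simp only [size]; omega
      · rw [show u = node a (node b c) from hw.symm]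
        exact Relation.ReflTransGen.single (.rot a b c)
    | node vl vr =>
      simp only [overP, node.injEq] at hw
      obtain ⟨h1, h2⟩ := hw
      refine ⟨u, node (node vl b) c, ?_, rfl, tle.refl _, ?_⟩
      · simp only [overP, ← h1, h2]
      · rw [← h2]
        exact Relation.ReflTransGen.single (.rot vl b c)
  | left r hstep ih =>
    intro u v hw
    cases v with
    | leaf =>
      exact ⟨_, leaf, rfl, by rw [show u = _ from hw.symm]; exact (TamariStep.left r hstep).size_eq,
        by rw [show u = _ from hw.symm]; exact Relation.ReflTransGen.single (.left r hstep), tle.refl _⟩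
    | node vl vr =>
      simp only [overP, node.injEq] at hw
      obtain ⟨h1, h2⟩ := hw
      obtain ⟨z₁, z₂, hz, hsz, hle1, hle2⟩ := ih u vl h1
      refine ⟨z₁, node z₂ r, ?_, hsz, hle1, ?_⟩
      · simp only [overP, ← hz]
      · rw [h2]; exact tle_node_left vr hle2
  | @right l r r' hstep ih =>
    intro u v hw
    cases v with
    | leaf =>
      exact ⟨_, leaf, rfl, by rw [show u = _ from hw.symm]; exact (TamariStep.right l hstep).size_eq,
        by rw [show u = _ from hw.symm]; exact Relation.ReflTransGen.single (.right l hstep), tle.refl _⟩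
    | node vl vr =>
      simp only [overP, node.injEq] at hw
      obtain ⟨h1, h2⟩ := hw
      refine ⟨u, node vl r, ?_, rfl, tle.refl _, ?_⟩
      · simp only [overP, ← h1]
      · exact tle_node_right vl (Relation.ReflTransGen.single (h2 ▸ hstep))

theorem tle_factor {z u v : PBT} (h : tle z (overP u v)) :
    ∃ z₁ z₂, z = overP z₁ z₂ ∧ size z₁ = size u ∧ tle z₁ u ∧ tle z₂ v := by
  induction h using Relation.ReflTransGen.head_induction_on with
  | refl => exact ⟨u, v, rfl, rfl, tle.refl _, tle.refl _⟩
  | head hstep htail ih =>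
    obtain ⟨z₁', z₂', hz', hs', h1', h2'⟩ := ih
    obtain ⟨z₁, z₂, hz, hs, h1, h2⟩ := step_factor hstep z₁' z₂' hz'
    exact ⟨z₁, z₂, hz, hs.trans hs', h1.trans h1', h2.trans h2'⟩

theorem tle_over_iff {x y x' y' : PBT} (hs : size x = size x') :
    tle (overP x y) (overP x' y') ↔ tle x x' ∧ tle y y' := by
  constructor
  · intro h
    obtain ⟨z₁, z₂, hz, hsz, h1, h2⟩ := tle_factor h
    obtain ⟨e1, e2⟩ := over_inj hz (hs.trans hsz.symm)
    exact ⟨e1 ▸ h1, e2 ▸ h2⟩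
  · exact fun ⟨h1, h2⟩ => tle_over_mono h1 h2

theorem size_leftComb (p : ℕ) : size (leftComb p) = p := by
  induction p with
  | zero => rfl
  | succ p ih => simp only [leftComb, size, ih]

theorem over_leftComb (p q : ℕ) : overP (leftComb p) (leftComb q) = leftComb (p + q) := by
  induction q with
  | zero => rfl
  | succ q ih => simp only [leftComb, overP, ih]; rfl

theorem exists_step_to {t : PBT} (h : t ≠ leftComb (size t)) : ∃ s, TamariStep s t := by
  induction t with
  | leaf => exact absurd rfl h
  | node l r ihl ihr =>
    by_cases hl : l = leftComb (size l)
    · by_cases hr : r = leftComb (size r)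
      · cases hq : size r with
        | zero =>
          exfalso; apply h
          have hr0 : r = leaf := by rw [hr, hq]; rfl
          subst hr0
          simp only [size, Nat.add_zero, leftComb]
          rw [← hl]
        | succ m =>
          have hrm : r = node (leftComb m) leaf := by rw [hr, hq]; rfl
          rw [hrm]
          exact ⟨node (node l (leftComb m)) leaf, .rot l (leftComb m) leaf⟩
      · obtain ⟨s, hs⟩ := ihr hr
        exact ⟨node l s, .right l hs⟩
    · obtain ⟨s, hs⟩ := ihl hl
      exact ⟨node s r, .left r hs⟩

theorem leftComb_tle (t : PBT) : tle (leftComb (size t)) t := by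
  by_cases h : t = leftComb (size t)
  · exact h ▸ tle.refl _
  · obtain ⟨s, hs⟩ := exists_step_to h
    have hrec := leftComb_tle s
    rw [hs.size_eq] at hrec
    exact Relation.ReflTransGen.tail hrec hs
termination_by wt t
decreasing_by exact hs.wt_lt

theorem leftComb_tle' {t : PBT} {n : ℕ} (h : size t = n) : tle (leftComb n) t :=
  h ▸ leftComb_tle t

theorem eq_leftComb_of_tle {t : PBT} {n : ℕ} (h : tle t (leftComb n)) : t = leftComb n := by
  have hs : size t = n := by rw [h.size_eq, size_leftComb]
  exact tle.antisymm h (leftComb_tle' hs)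

theorem mem_treesOfSize : ∀ (n : ℕ) (t : PBT), t ∈ treesOfSize n ↔ size t = n := by
  intro n
  induction n using Nat.strong_induction_on with
  | _ n ih =>
    intro t
    match n with
    | 0 =>
      cases t <;> simp [treesOfSize, size]
    | Nat.succ n =>
      rw [treesOfSize]
      simp only [List.mem_flatMap, List.mem_map, List.mem_attach, true_and]
      constructor
      · rintro ⟨⟨i, hi⟩, l, hl, r, hr, rfl⟩
        have hi' : i < n + 1 := List.mem_range.mp hi
        have hsl : size l = i := (ih i hi' l).mp hl
        have hsr : size r = n - i := (ih (n - i) (Nat.lt_succ_of_le (Nat.sub_le _ _)) r).mp hr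
        simp only [size, hsl, hsr]
        omega
      · intro ht
        cases t with
        | leaf => exact absurd ht (by simp [size])
        | node l r =>
          simp only [size] at ht
          have hle : size l ≤ n := by omega
          refine ⟨⟨size l, List.mem_range.mpr (by omega)⟩, l, ?_, r, ?_, rfl⟩
          · exact (ih (size l) (by omega) l).mpr rfl
          · exact (ih (n - size l) (Nat.lt_succ_of_le (Nat.sub_le _ _)) r).mpr (by omega)

theorem nodup_treesOfSize : ∀ n : ℕ, (treesOfSize n).Nodup := by
  intro n
  induction n using Nat.strong_induction_on with
  | _ n ih =>
    match n with
    | 0 => simp [treesOfSize]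
    | Nat.succ n =>
      rw [treesOfSize]
      rw [List.nodup_flatMap]
      constructor
      · rintro ⟨i, hi⟩ -
        rw [List.nodup_flatMap]
        constructor
        · intro l _
          exact (ih (n - i) (Nat.lt_succ_of_le (Nat.sub_le _ _))).map
            (fun r r' h => by injection h)
        · refine List.Pairwise.imp ?_ (ih i (List.mem_range.mp hi))
          intro l l' hne
          rw [Function.onFun, List.disjoint_left]
          rintro x hx hx'
          simp only [List.mem_map] at hx hx'
          obtain ⟨r, _, rfl⟩ := hx
          obtain ⟨r', _, h⟩ := hx'
          injection h with h1 h2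
          exact hne h1.symm
      · refine List.Pairwise.imp ?_ (List.nodup_attach.mpr List.nodup_range)
        rintro ⟨i, hi⟩ ⟨j, hj⟩ hne
        rw [Function.onFun, List.disjoint_left]
        rintro x hx hx'
        simp only [List.mem_flatMap, List.mem_map] at hx hx'
        obtain ⟨l, hl, r, hr, rfl⟩ := hx
        obtain ⟨l', hl', r', hr', h⟩ := hx'
        injection h with h1 h2
        apply hne
        have e1 : size l = i := (mem_treesOfSize _ _).mp hl
        have e2 : size l' = j := (mem_treesOfSize _ _).mp hl'
        exact Subtype.ext (show i = j by rw [← e1, ← e2, h1])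

open Classical in
noncomputable def cut (p : Nat) (z : PBT) : PBT × PBT :=
  if h : ∃ x y, z = overP x y ∧ size x = p then (h.choose, h.choose_spec.choose) else (z, leaf)

theorem cut_eq {p : Nat} {z x y : PBT} (hz : z = overP x y) (hx : size x = p) :
    cut p z = (x, y) := by
  have h : ∃ x y, z = overP x y ∧ size x = p := ⟨x, y, hz, hx⟩
  unfold cut
  rw [dif_pos h]
  obtain ⟨hz', hx'⟩ := h.choose_spec.choose_spec
  have heq : overP x y = overP h.choose h.choose_spec.choose := hz ▸ hz'
  obtain ⟨e1, e2⟩ := over_inj heq (by rw [hx, hx'])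
  rw [Prod.mk.injEq]
  exact ⟨e1.symm, e2.symm⟩

open Classical in
theorem mobius_key (μ : PBT → PBT → ℤ)
    (hμrefl : ∀ t : PBT, μ t t = 1)
    (hμsum : ∀ s t : PBT, s ≠ t → tle s t →
      ((treesOfSize (size t)).map
        (fun z => if tle s z ∧ tle z t then μ s z else 0)).sum = 0)
    (p q : ℕ) :
    ∀ (N : ℕ) (a b : PBT), wt (overP a b) < N → size a = p → size b = q →
      μ (leftComb (p + q)) (overP a b) = μ (leftComb p) a * μ (leftComb q) b := by
  have hsum' : ∀ (m : ℕ) (t : PBT), size t = m → t ≠ leftComb m →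
      ∑ z ∈ (treesOfSize m).toFinset.filter (fun z => tle z t), μ (leftComb m) z = 0 := by
    intro m t hm ht
    have h0 := hμsum (leftComb m) t (fun h => ht h.symm) (leftComb_tle' hm)
    rw [hm, ← List.sum_toFinset _ (nodup_treesOfSize m)] at h0
    rw [Finset.sum_filter]
    refine Eq.trans (Finset.sum_congr rfl fun z hz => ?_) h0
    have hcz : tle (leftComb m) z :=
      leftComb_tle' ((mem_treesOfSize m z).mp (List.mem_toFinset.mp hz))
    by_cases h : tle z t <;> simp [h, hcz]
  intro N
  induction N with
  | zero => intro a b h _ _; omega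
  | succ N ih =>
    intro a b hN ha hb
    by_cases hcase : a = leftComb p ∧ b = leftComb q
    · rw [hcase.1, hcase.2, over_leftComb, hμrefl, hμrefl, hμrefl]; ring
    · have hst : size (overP a b) = p + q := by rw [size_over, ha, hb]
      have htc : overP a b ≠ leftComb (p + q) := by
        intro h
        rw [← over_leftComb] at h
        obtain ⟨e1, e2⟩ := over_inj h (by rw [ha, size_leftComb])
        exact hcase ⟨e1, e2⟩
      have h0 := hsum' (p + q) (overP a b) hst htc
      set Fn := (treesOfSize (p + q)).toFinset.filter (fun z => tle z (overP a b)) with hFn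
      set Fa := (treesOfSize p).toFinset.filter (fun x => tle x a) with hFa
      set Fb := (treesOfSize q).toFinset.filter (fun y => tle y b) with hFb
      have hmemFa : ∀ x : PBT, x ∈ Fa ↔ size x = p ∧ tle x a := by
        intro x
        rw [hFa, Finset.mem_filter, List.mem_toFinset, mem_treesOfSize]
      have hmemFb : ∀ y : PBT, y ∈ Fb ↔ size y = q ∧ tle y b := by
        intro y
        rw [hFb, Finset.mem_filter, List.mem_toFinset, mem_treesOfSize]
      have hmemFn : ∀ z : PBT, z ∈ Fn ↔ size z = p + q ∧ tle z (overP a b) := by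
        intro z
        rw [hFn, Finset.mem_filter, List.mem_toFinset, mem_treesOfSize]
      -- bijection step
      have hbij : ∑ z ∈ Fn, μ (leftComb (p + q)) z =
          ∑ xy ∈ Fa ×ˢ Fb, μ (leftComb (p + q)) (overP xy.1 xy.2) := by
        refine Finset.sum_nbij' (fun z => cut p z) (fun xy => overP xy.1 xy.2)
          ?_ ?_ ?_ ?_ ?_
        · intro z hz
          show cut p z ∈ Fa ×ˢ Fb
          obtain ⟨hz1, hz2⟩ := (hmemFn z).mp hz
          obtain ⟨x, y, hxy, hsx, h1, h2⟩ := tle_factor hz2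
          have hsx' : size x = p := by rw [hsx, ha]
          rw [cut_eq hxy hsx']
          have hsy : size y = q := by
            have := congrArg size hxy
            rw [size_over] at this
            omega
          rw [Finset.mem_product]
          exact ⟨(hmemFa x).mpr ⟨hsx', h1⟩, (hmemFb y).mpr ⟨hsy, h2⟩⟩
        · intro xy hxy
          rw [Finset.mem_product] at hxy
          obtain ⟨h1, h2⟩ := hxy
          obtain ⟨hs1, hle1⟩ := (hmemFa _).mp h1
          obtain ⟨hs2, hle2⟩ := (hmemFb _).mp h2
          refine (hmemFn _).mpr ⟨by rw [size_over, hs1, hs2], tle_over_mono hle1 hle2⟩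
        · intro z hz
          show overP (cut p z).1 (cut p z).2 = z
          obtain ⟨hz1, hz2⟩ := (hmemFn z).mp hz
          obtain ⟨x, y, hxy, hsx, h1, h2⟩ := tle_factor hz2
          have hsx' : size x = p := by rw [hsx, ha]
          rw [cut_eq hxy hsx']
          exact hxy.symm
        · intro xy hxy
          show cut p (overP xy.1 xy.2) = xy
          rw [Finset.mem_product] at hxy
          obtain ⟨hs1, _⟩ := (hmemFa _).mp hxy.1
          rw [cut_eq rfl hs1]
        · intro z hz
          show _ = μ (leftComb (p + q)) (overP (cut p z).1 (cut p z).2)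
          obtain ⟨hz1, hz2⟩ := (hmemFn z).mp hz
          obtain ⟨x, y, hxy, hsx, h1, h2⟩ := tle_factor hz2
          have hsx' : size x = p := by rw [hsx, ha]
          rw [cut_eq hxy hsx']
          exact congrArg _ hxy
      have habmem : (a, b) ∈ Fa ×ˢ Fb := by
        rw [Finset.mem_product]
        exact ⟨(hmemFa a).mpr ⟨ha, tle.refl a⟩, (hmemFb b).mpr ⟨hb, tle.refl b⟩⟩
      -- sum overP erase with induction hypothesis
      have herase : ∀ xy ∈ (Fa ×ˢ Fb).erase (a, b),
          μ (leftComb (p + q)) (overP xy.1 xy.2) =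
            μ (leftComb p) xy.1 * μ (leftComb q) xy.2 := by
        intro xy hxy
        obtain ⟨hne, hmem⟩ := Finset.mem_erase.mp hxy
        rw [Finset.mem_product] at hmem
        obtain ⟨hs1, hle1⟩ := (hmemFa _).mp hmem.1
        obtain ⟨hs2, hle2⟩ := (hmemFb _).mp hmem.2
        have hlt : wt (overP xy.1 xy.2) < N := by
          have hle : tle (overP xy.1 xy.2) (overP a b) := tle_over_mono hle1 hle2
          have hne' : overP xy.1 xy.2 ≠ overP a b := by
            intro h
            obtain ⟨e1, e2⟩ := over_inj h (by rw [hs1, ha])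
            exact hne (by cases xy; simp_all)
          have := hle.wt_lt hne'
          omega
        exact ih xy.1 xy.2 hlt hs1 hs2
      -- the product of the two interval sums vanishes
      have hSaSb : (∑ x ∈ Fa, μ (leftComb p) x) * (∑ y ∈ Fb, μ (leftComb q) y) = 0 := by
        by_cases haa : a = leftComb p
        · have hbb : b ≠ leftComb q := fun h => hcase ⟨haa, h⟩
          rw [hsum' q b hb hbb]
          ring
        · rw [hsum' p a ha haa]
          ring
      have hprod : ∑ xy ∈ Fa ×ˢ Fb, μ (leftComb p) xy.1 * μ (leftComb q) xy.2 =
          (∑ x ∈ Fa, μ (leftComb p) x) * (∑ y ∈ Fb, μ (leftComb q) y) := by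
        rw [Finset.sum_mul_sum, Finset.sum_product]
      have e1 : ∑ xy ∈ (Fa ×ˢ Fb).erase (a, b), μ (leftComb (p + q)) (overP xy.1 xy.2)
          + μ (leftComb (p + q)) (overP a b)
          = ∑ xy ∈ Fa ×ˢ Fb, μ (leftComb (p + q)) (overP xy.1 xy.2) :=
        Finset.sum_erase_add _ _ habmem
      have e2 : ∑ xy ∈ (Fa ×ˢ Fb).erase (a, b), μ (leftComb p) xy.1 * μ (leftComb q) xy.2
          + μ (leftComb p) a * μ (leftComb q) b
          = ∑ xy ∈ Fa ×ˢ Fb, μ (leftComb p) xy.1 * μ (leftComb q) xy.2 :=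
        Finset.sum_erase_add _ _ habmem
      have e3 : ∑ xy ∈ (Fa ×ˢ Fb).erase (a, b), μ (leftComb (p + q)) (overP xy.1 xy.2)
          = ∑ xy ∈ (Fa ×ˢ Fb).erase (a, b), μ (leftComb p) xy.1 * μ (leftComb q) xy.2 :=
        Finset.sum_congr rfl herase
      rw [hbij] at h0
      rw [hprod, hSaSb] at e2
      rw [e3, h0] at e1
      linarith

theorem cut_spec {p q : ℕ} {t' t'' z : PBT} (hp : size t' = p) (hq : size t'' = q)
    (h : tle z (overP t' t'')) :
    z = overP (cut p z).1 (cut p z).2 ∧ size (cut p z).1 = p ∧ size (cut p z).2 = q ∧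
      tle (cut p z).1 t' ∧ tle (cut p z).2 t'' := by
  obtain ⟨x, y, hz, hsx, h1, h2⟩ := tle_factor h
  have hsx' : size x = p := by rw [hsx, hp]
  rw [cut_eq hz hsx']
  exact ⟨hz, hsx', h2.size_eq.trans hq, h1, h2⟩

end PBT

open PBT in
open Classical in
/-- the Tamari interval `[c_{p+q}, t' / t'']`, where
`|t'| = p` and `|t''| = q`, is isomorphic as a poset to the product of the
Tamari intervals `[c_p, t']` and `[c_q, t'']`; consequently the Möbius
function of the Tamari order satisfies
`μ(c_{p+q}, t'/t'') = μ(c_p, t') · μ(c_q, t'')`. -/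
theorem tamari_interval_product (μ : PBT → PBT → ℤ)
    (hμrefl : ∀ t : PBT, μ t t = 1)
    (hμnot : ∀ s t : PBT, ¬ tle s t → μ s t = 0)
    (hμsum : ∀ s t : PBT, s ≠ t → tle s t →
      ((treesOfSize (size t)).map
        (fun z => if tle s z ∧ tle z t then μ s z else 0)).sum = 0)
    (p q : ℕ) (t' t'' : PBT) (hp : size t' = p) (hq : size t'' = q) :
    (∃ e : {z : PBT // tle (leftComb (p + q)) z ∧ tle z (overP t' t'')} ≃
        ({z : PBT // tle (leftComb p) z ∧ tle z t'} ×
         {z : PBT // tle (leftComb q) z ∧ tle z t''}),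
      ∀ a b, tle a.1 b.1 ↔
        (tle (e a).1.1 (e b).1.1 ∧ tle (e a).2.1 (e b).2.1)) ∧
    μ (leftComb (p + q)) (overP t' t'') = μ (leftComb p) t' * μ (leftComb q) t'' := by
  constructor
  · refine ⟨⟨fun z =>
        (⟨(cut p z.1).1, leftComb_tle' (cut_spec hp hq z.2.2).2.1,
            (cut_spec hp hq z.2.2).2.2.2.1⟩,
         ⟨(cut p z.1).2, leftComb_tle' (cut_spec hp hq z.2.2).2.2.1,
            (cut_spec hp hq z.2.2).2.2.2.2⟩),
      fun xy => ⟨overP xy.1.1 xy.2.1,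
        leftComb_tle' (by rw [size_over, xy.1.2.2.size_eq, xy.2.2.2.size_eq, hp, hq]),
        tle_over_mono xy.1.2.2 xy.2.2.2⟩,
      fun z => Subtype.ext (cut_spec hp hq z.2.2).1.symm,
      fun xy => ?_⟩, ?_⟩
    · have hs1 : size xy.1.1 = p := xy.1.2.2.size_eq.trans hp
      have hc : cut p (overP xy.1.1 xy.2.1) = (xy.1.1, xy.2.1) := cut_eq rfl hs1
      refine Prod.ext (Subtype.ext ?_) (Subtype.ext ?_)
      · show (cut p (overP xy.1.1 xy.2.1)).1 = xy.1.1
        rw [hc]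
      · show (cut p (overP xy.1.1 xy.2.1)).2 = xy.2.1
        rw [hc]
    · intro a b
      obtain ⟨hza, hsa1, hsa2, _, _⟩ := cut_spec hp hq a.2.2
      obtain ⟨hzb, hsb1, hsb2, _, _⟩ := cut_spec hp hq b.2.2
      have hiff := tle_over_iff (x := (cut p a.1).1) (y := (cut p a.1).2)
        (x' := (cut p b.1).1) (y' := (cut p b.1).2) (by rw [hsa1, hsb1])
      rw [← hza, ← hzb] at hiff
      exact hiff
  · exact mobius_key μ hμrefl hμsum p q (wt (overP t' t'') + 1) t' t''
      (Nat.lt_succ_self _) hp hq
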